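/- Let N ≥ 1 be an integer and p > 1. For every Schwartz function u : ℝ^N → ℂ, the following integration-by-parts identity holds: Re ∫_{ℝ^N} (x · ∇ū(x)) |u(x)|^{p-1} u(x) dx = -(N/(p+1)) ∫_{ℝ^N} |u(x)|^{p+1} dx. -/

import Mathlib

open MeasureTheory

section aux

variable {N : ℕ}

local notation "E" => EuclideanSpace ℝ (Fin N)

lemma my_abs_coord_le_norm (x : E) (j : Fin N) : |x j| ≤ ‖x‖ := by
  rw [EuclideanSpace.norm_eq]
  have h1 : |x j| = Real.sqrt (‖x j‖ ^ 2) := by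
    rw [Real.sqrt_sq_eq_abs]; simp [abs_abs]
  rw [h1]
  apply Real.sqrt_le_sqrt
  exact Finset.single_le_sum (f := fun i => ‖x i‖ ^ 2) (fun i _ => by positivity) (Finset.mem_univ j)

lemma my_sum_single (x : E) : (∑ j, x j • EuclideanSpace.single j (1:ℝ)) = x := by
  apply PiLp.ext
  intro i
  have : (∑ j, x j • EuclideanSpace.single j (1:ℝ)) i
      = ∑ j, (x j • EuclideanSpace.single j (1:ℝ)) i := by
    have := congrFun (WithLp.ofLp_sum (p := 2) (s := Finset.univ) (f := fun j => x j • EuclideanSpace.single j (1:ℝ))) i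
    rw [Finset.sum_apply] at this; exact this
  rw [this]
  simp [EuclideanSpace.single_apply]

end aux

section core

variable {N : ℕ}

local notation "E" => EuclideanSpace ℝ (Fin N)
local notation "⟪" a ", " b "⟫" => @inner ℝ ℂ _ a b

/-- The derivative of `x ↦ ‖u x‖ ^ (p+1)`. -/
noncomputable def Fd (p : ℝ) (u : SchwartzMap (EuclideanSpace ℝ (Fin N)) ℂ) (x : E) :
    E →L[ℝ] ℝ :=
  ((p+1) * ‖u x‖ ^ (p-1)) •
    (Complex.reCLM.comp (((starRingEnd ℂ) (u x)) • fderiv ℝ (⇑u) x))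

lemma Fd_apply (p : ℝ) (u : SchwartzMap (EuclideanSpace ℝ (Fin N)) ℂ) (x : E) (v : E) :
    Fd p u x v = (p+1) * ‖u x‖ ^ (p-1) * ((starRingEnd ℂ) (u x) * fderiv ℝ (⇑u) x v).re := by
  simp [Fd, mul_assoc]

lemma hasFDerivAt_F (p : ℝ) (hp : 1 < p) (u : SchwartzMap (EuclideanSpace ℝ (Fin N)) ℂ)
    (x : E) :
    HasFDerivAt (fun y : E => ‖u y‖ ^ (p+1)) (Fd p u x) x := by
  have hud : Differentiable ℝ (⇑u) := (u.smooth 1).differentiable one_ne_zero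
  have hu : HasFDerivAt (⇑u) (fderiv ℝ (⇑u) x) x := (hud x).hasFDerivAt
  have hq1 : (1:ℝ) ≤ (p+1)/2 := by linarith
  have hg := hu.inner ℝ hu
  have hr : HasDerivAt (fun t : ℝ => t ^ ((p+1)/2))
      (((p+1)/2) * (⟪u x, u x⟫) ^ ((p+1)/2 - 1)) (⟪u x, u x⟫) :=
    Real.hasDerivAt_rpow_const (Or.inr hq1)
  have hcomp := hr.comp_hasFDerivAt x hg
  rw [Function.comp_def] at hcomp
  have hfun : (fun y : E => (⟪u y, u y⟫ : ℝ) ^ ((p+1)/2)) = fun y : E => ‖u y‖ ^ (p+1) := by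
    funext y
    rw [real_inner_self_eq_norm_sq, ← Real.rpow_natCast (‖u y‖) 2,
      ← Real.rpow_mul (norm_nonneg _)]
    congr 1
    push_cast
    ring
  rw [hfun] at hcomp
  refine HasFDerivAt.congr_fderiv hcomp ?_
  ext v
  have h2 : (⟪u x, u x⟫ : ℝ) ^ ((p+1)/2 - 1) = ‖u x‖ ^ (p-1) := by
    rw [real_inner_self_eq_norm_sq, ← Real.rpow_natCast (‖u x‖) 2,
      ← Real.rpow_mul (norm_nonneg _)]
    congr 1
    push_cast
    ring
  have h3 : (⟪u x, fderiv ℝ (⇑u) x v⟫ : ℝ) = ((starRingEnd ℂ) (u x) * fderiv ℝ (⇑u) x v).re :=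
    by rw [Complex.inner, mul_comm]
  have h4 : (⟪fderiv ℝ (⇑u) x v, u x⟫ : ℝ) = ((starRingEnd ℂ) (u x) * fderiv ℝ (⇑u) x v).re := by
    rw [real_inner_comm]; exact h3
  simp only [Fd_apply, ContinuousLinearMap.smul_apply, ContinuousLinearMap.comp_apply,
    ContinuousLinearMap.prod_apply, fderivInnerCLM_apply, smul_eq_mul, h2, h3, h4]
  ring

end core

/-- Virial identity for the nonlinearity:
`Re ∫ (x·∇ū) |u|^{p-1}u dx = -(N/(p+1)) ∫ |u|^{p+1} dx`. -/
theorem nonlinearity_virial_identity (N : ℕ) (hN : 1 ≤ N) (p : ℝ) (hp : 1 < p)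
    (u : SchwartzMap (EuclideanSpace ℝ (Fin N)) ℂ) :
    (∫ x, (starRingEnd ℂ) (fderiv ℝ (⇑u) x x) * ((‖u x‖ ^ (p - 1) : ℝ) : ℂ) * u x).re
      = -((N : ℝ) / (p + 1)) * ∫ x, ‖u x‖ ^ (p + 1) := by
  classical
  set E := EuclideanSpace ℝ (Fin N)
  have hp1 : (0:ℝ) < p + 1 := by linarith
  have hpm1 : (0:ℝ) ≤ p - 1 := by linarith
  have hud : Differentiable ℝ (⇑u) := (u.smooth 1).differentiable one_ne_zero
  set F : E → ℝ := fun x => ‖u x‖ ^ (p+1) with hFdef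
  set e : Fin N → E := fun j => EuclideanSpace.single j (1:ℝ) with hedef
  have hen : ∀ j, ‖e j‖ = 1 := fun j => by
    rw [hedef]; rw [EuclideanSpace.norm_single]; simp
  -- bound on u
  obtain ⟨M, hM⟩ : ∃ M : ℝ, ∀ x, ‖u x‖ ≤ M := by
    obtain ⟨C, hC⟩ := u.decay 0 0
    exact ⟨C, fun x => by simpa using hC.2 x⟩
  have hM0 : 0 ≤ M := le_trans (norm_nonneg _) (hM 0)
  -- the fderiv of u as a Schwartz map
  set U : SchwartzMap E (E →L[ℝ] ℂ) := SchwartzMap.fderivCLM ℝ E ℂ u with hUdef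
  have hU : ∀ x, U x = fderiv ℝ (⇑u) x := fun x => SchwartzMap.fderivCLM_apply ℝ u x
  have intU1 : Integrable (fun x : E => ‖x‖ * ‖U x‖) := by
    simpa using U.integrable_pow_mul volume 1
  have intu1 : Integrable (fun x : E => ‖x‖ * ‖u x‖) := by
    simpa using u.integrable_pow_mul volume 1
  -- continuity facts
  have hcontDu : Continuous fun x : E => fderiv ℝ (⇑u) x := by
    simp only [← funext hU]; exact U.continuous
  have hcontnorm : Continuous fun x : E => (‖u x‖ ^ (p-1) : ℝ) :=
    (u.continuous.norm).rpow_const (fun x => Or.inr hpm1)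
  have hcontF : Continuous F :=
    (u.continuous.norm).rpow_const (fun x => Or.inr (by linarith))
  have hcontDuApp : Continuous fun x : E => fderiv ℝ (⇑u) x x :=
    isBoundedBilinearMap_apply.continuous.comp (hcontDu.prodMk continuous_id)
  have hcontFd : ∀ v : E, Continuous fun x : E => Fd p u x v := by
    intro v
    simp only [Fd_apply]
    have h1 : Continuous fun x : E => fderiv ℝ (⇑u) x v :=
      isBoundedBilinearMap_apply.continuous.comp (hcontDu.prodMk continuous_const)
    exact ((continuous_const.mul hcontnorm).mul
      (Complex.continuous_re.comp ((continuous_star.comp u.continuous).mul h1)))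
  -- rpow bounds
  have hupow : ∀ (x : E) (r : ℝ), 0 ≤ r → ‖u x‖ ^ r ≤ M ^ r := fun x r hr =>
    Real.rpow_le_rpow (norm_nonneg _) (hM x) hr
  have hFbound : ∀ x : E, F x ≤ M ^ p * ‖u x‖ := by
    intro x
    have h1 : F x = ‖u x‖ ^ p * ‖u x‖ := by
      rw [hFdef]
      simp only
      rw [Real.rpow_add' (norm_nonneg _) (by linarith), Real.rpow_one]
    rw [h1]
    exact mul_le_mul_of_nonneg_right (hupow x p (by linarith)) (norm_nonneg _)
  have hFnonneg : ∀ x : E, 0 ≤ F x := fun x => Real.rpow_nonneg (norm_nonneg _) _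
  -- bound on Fd
  have hFdbound : ∀ (x : E) (v : E), |Fd p u x v| ≤ (p+1) * M ^ (p-1) * M * (‖U x‖ * ‖v‖) := by
    intro x v
    rw [Fd_apply]
    have h1 : |((starRingEnd ℂ) (u x) * fderiv ℝ (⇑u) x v).re|
        ≤ ‖u x‖ * (‖fderiv ℝ (⇑u) x‖ * ‖v‖) := by
      calc |((starRingEnd ℂ) (u x) * fderiv ℝ (⇑u) x v).re|
          ≤ ‖(starRingEnd ℂ) (u x) * fderiv ℝ (⇑u) x v‖ := Complex.abs_re_le_norm _
        _ = ‖u x‖ * ‖fderiv ℝ (⇑u) x v‖ := by rw [norm_mul]; simp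
        _ ≤ ‖u x‖ * (‖fderiv ℝ (⇑u) x‖ * ‖v‖) := by
            exact mul_le_mul_of_nonneg_left ((fderiv ℝ (⇑u) x).le_opNorm v) (norm_nonneg _)
    rw [abs_mul]
    have h2 : |(p+1) * ‖u x‖ ^ (p-1)| ≤ (p+1) * M ^ (p-1) := by
      rw [abs_of_nonneg (by positivity)]
      exact mul_le_mul_of_nonneg_left (hupow x _ hpm1) (by linarith)
    calc |(p+1) * ‖u x‖ ^ (p-1)| * |((starRingEnd ℂ) (u x) * fderiv ℝ (⇑u) x v).re|
        ≤ ((p+1) * M ^ (p-1)) * (‖u x‖ * (‖fderiv ℝ (⇑u) x‖ * ‖v‖)) := by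
          apply mul_le_mul h2 h1 (abs_nonneg _) (by positivity)
      _ ≤ ((p+1) * M ^ (p-1)) * (M * (‖fderiv ℝ (⇑u) x‖ * ‖v‖)) := by
          apply mul_le_mul_of_nonneg_left
            (mul_le_mul_of_nonneg_right (hM x) (by positivity)) (by positivity)
      _ = (p+1) * M ^ (p-1) * M * (‖U x‖ * ‖v‖) := by rw [hU]; ring
  -- integrability facts
  have hFint : Integrable F := by
    apply Integrable.mono' ((u.integrable (μ := volume)).norm.const_mul (M ^ p))
      hcontF.aestronglyMeasurable
    filter_upwards with x
    rw [Real.norm_eq_abs, abs_of_nonneg (hFnonneg x)]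
    exact hFbound x
  have hxFint : ∀ j : Fin N, Integrable (fun x : E => x j * F x) := by
    intro j
    apply Integrable.mono' (intu1.const_mul (M ^ p))
      (((EuclideanSpace.proj (𝕜 := ℝ) j).continuous.mul hcontF).aestronglyMeasurable)
    filter_upwards with x
    rw [Real.norm_eq_abs, Pi.mul_apply, abs_mul, abs_of_nonneg (hFnonneg x)]
    calc |x j| * F x ≤ ‖x‖ * (M ^ p * ‖u x‖) := by
          apply mul_le_mul (my_abs_coord_le_norm x j) (hFbound x) (hFnonneg x) (norm_nonneg _)
      _ = M ^ p * (‖x‖ * ‖u x‖) := by ring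
  have hxFdint : ∀ j : Fin N, Integrable (fun x : E => x j * Fd p u x (e j)) := by
    intro j
    apply Integrable.mono' (intU1.const_mul ((p+1) * M ^ (p-1) * M))
      (((EuclideanSpace.proj (𝕜 := ℝ) j).continuous.mul (hcontFd (e j))).aestronglyMeasurable)
    filter_upwards with x
    rw [Real.norm_eq_abs, Pi.mul_apply, abs_mul]
    calc |x j| * |Fd p u x (e j)| ≤ ‖x‖ * ((p+1) * M ^ (p-1) * M * (‖U x‖ * ‖e j‖)) := by
          apply mul_le_mul (my_abs_coord_le_norm x j) (hFdbound x (e j)) (abs_nonneg _)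
            (norm_nonneg _)
      _ = (p+1) * M ^ (p-1) * M * (‖x‖ * ‖U x‖) := by rw [hen j]; ring
  have hHint : Integrable (fun x : E =>
      (starRingEnd ℂ) (fderiv ℝ (⇑u) x x) * ((‖u x‖ ^ (p - 1) : ℝ) : ℂ) * u x) := by
    apply Integrable.mono' (intU1.const_mul (M ^ (p-1) * M))
    · exact (((continuous_star.comp hcontDuApp).mul
        (Complex.continuous_ofReal.comp hcontnorm)).mul u.continuous).aestronglyMeasurable
    filter_upwards with x
    rw [norm_mul, norm_mul]
    calc ‖(starRingEnd ℂ) (fderiv ℝ (⇑u) x x)‖ * ‖((‖u x‖ ^ (p - 1) : ℝ) : ℂ)‖ * ‖u x‖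
        ≤ (‖fderiv ℝ (⇑u) x‖ * ‖x‖) * (M ^ (p-1)) * M := by
          apply mul_le_mul _ (hM x) (norm_nonneg _) (by positivity)
          apply mul_le_mul _ _ (norm_nonneg _) (by positivity)
          · rw [RingHomIsometric.norm_map]
            exact (fderiv ℝ (⇑u) x).le_opNorm x
          · rw [Complex.norm_real, Real.norm_eq_abs,
              abs_of_nonneg (Real.rpow_nonneg (norm_nonneg _) _)]
            exact hupow x _ hpm1
      _ = M ^ (p-1) * M * (‖x‖ * ‖fderiv ℝ (⇑u) x‖) := by ring
      _ = M ^ (p-1) * M * (‖x‖ * ‖U x‖) := by rw [hU]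
  -- pointwise identity
  have hpoint : ∀ x : E,
      ((starRingEnd ℂ) (fderiv ℝ (⇑u) x x) * ((‖u x‖ ^ (p - 1) : ℝ) : ℂ) * u x).re
        = (p+1)⁻¹ * Fd p u x x := by
    intro x
    rw [Fd_apply]
    have hre : ((starRingEnd ℂ) (fderiv ℝ (⇑u) x x) * ((‖u x‖ ^ (p - 1) : ℝ) : ℂ) * u x).re
        = ‖u x‖ ^ (p-1) * ((starRingEnd ℂ) (u x) * fderiv ℝ (⇑u) x x).re := by
      simp only [Complex.mul_re, Complex.mul_im, Complex.conj_re, Complex.conj_im,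
        Complex.ofReal_re, Complex.ofReal_im]
      ring
    rw [hre]
    field_simp
  -- fderiv of F
  have hFderiv : ∀ x : E, fderiv ℝ F x = Fd p u x := fun x => (hasFDerivAt_F p hp u x).fderiv
  have hFdiff : Differentiable ℝ F := fun x => (hasFDerivAt_F p hp u x).differentiableAt
  -- integration by parts in each coordinate
  have key : ∀ j : Fin N, ∫ x : E, x j * Fd p u x (e j) = -∫ x : E, F x := by
    intro j
    have hproj : Differentiable ℝ (fun x : E => x j) :=
      (EuclideanSpace.proj (𝕜 := ℝ) j).differentiable
    have hprojfd : ∀ x : E, fderiv ℝ (fun y : E => y j) x = EuclideanSpace.proj (𝕜 := ℝ) j :=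
      fun x => (EuclideanSpace.proj (𝕜 := ℝ) j).fderiv
    have hprojval : ∀ x : E, fderiv ℝ (fun y : E => y j) x (e j) = 1 := by
      intro x
      rw [hprojfd x]
      simp only [hedef]
      rw [show (PiLp.proj 2 (fun _ : Fin N => ℝ) j) (EuclideanSpace.single j 1)
          = (EuclideanSpace.single j (1:ℝ)) j from rfl]
      simp [EuclideanSpace.single_apply]
    have h1 : Integrable (fun x : E => fderiv ℝ (fun y : E => y j) x (e j) * F x) := by
      simp only [hprojval]
      simpa using hFint
    have h2 : Integrable (fun x : E => x j * fderiv ℝ F x (e j)) := by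
      simp only [hFderiv]
      exact hxFdint j
    have h0 := integral_mul_fderiv_eq_neg_fderiv_mul_of_integrable (μ := volume)
      h1 h2 (hxFint j) (fun x _ => hproj x) (fun x _ => hFdiff x)
    simp only [hFderiv, hprojval, one_mul] at h0
    exact h0
  -- decomposition of the full derivative direction
  have hdecomp : ∀ x : E, Fd p u x x = ∑ j, x j * Fd p u x (e j) := by
    intro x
    have hx : Fd p u x x = Fd p u x (∑ j, x j • e j) := by
      rw [hedef, my_sum_single]
    rw [hx, map_sum]
    simp [smul_eq_mul]
  -- main computation
  have hmain : ∫ x : E, Fd p u x x = -(N : ℝ) * ∫ x : E, F x := by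
    calc ∫ x : E, Fd p u x x = ∫ x : E, ∑ j, x j * Fd p u x (e j) := by
          congr 1; funext x; exact hdecomp x
      _ = ∑ j, ∫ x : E, x j * Fd p u x (e j) :=
          integral_finset_sum _ (fun j _ => hxFdint j)
      _ = ∑ _j : Fin N, (-∫ x : E, F x) := by
          apply Finset.sum_congr rfl
          intro j _
          exact key j
      _ = -(N : ℝ) * ∫ x : E, F x := by
          rw [Finset.sum_const]
          simp only [Finset.card_univ, Fintype.card_fin, nsmul_eq_mul]
          ring
  calc (∫ x, (starRingEnd ℂ) (fderiv ℝ (⇑u) x x) * ((‖u x‖ ^ (p - 1) : ℝ) : ℂ) * u x).re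
      = ∫ x : E, ((starRingEnd ℂ) (fderiv ℝ (⇑u) x x) * ((‖u x‖ ^ (p - 1) : ℝ) : ℂ) * u x).re :=
        (integral_re hHint).symm
    _ = ∫ x : E, (p+1)⁻¹ * Fd p u x x := by
        congr 1; funext x; exact hpoint x
    _ = (p+1)⁻¹ * ∫ x : E, Fd p u x x := integral_const_mul _ _
    _ = (p+1)⁻¹ * (-(N : ℝ) * ∫ x : E, F x) := by rw [hmain]
    _ = -((N : ℝ) / (p + 1)) * ∫ x, ‖u x‖ ^ (p + 1) := by
        rw [hFdef]
        field_simp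
        rfl
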